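/- arXiv:1705.10089 — 2 statements merged into one kernel-verified Lean document; each statement's English description precedes it below -/
import Mathlib

section
/- Let R be a semiring and V an R-module with an additive spine S. Then every summand absorbing submodule W of V is generated as an R-module by W ∩ S, and moreover W ∩ S is an additive spine of W. -/
def halo (R : Type*) {V : Type*} [Semiring R] [AddCommMonoid V] [Module R V]
    (S : Set V) : Set V :=
  {v | ∃ l m : R, l • v ∈ S ∧ m • (l • v) = v}

/-- Halo of `S` computed inside the subset `W` of `V`. -/
def haloIn (R : Type*) {V : Type*} [Semiring R] [AddCommMonoid V] [Module R V]
    (W S : Set V) : Set V :=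
  {v | v ∈ W ∧ ∃ l m : R, l • v ∈ S ∧ m • (l • v) = v}

def IsAdditiveSpine (R : Type*) {V : Type*} [Semiring R] [AddCommMonoid V] [Module R V]
    (S : Set V) : Prop :=
  AddSubmonoid.closure (halo R S) = ⊤

def IsSA {R V : Type*} [Semiring R] [AddCommMonoid V] [Module R V]
    (W : Submodule R V) : Prop :=
  ∀ x y : V, x + y ∈ W → x ∈ W ∧ y ∈ W

theorem sa_gen_by_spine {R V : Type*} [Semiring R] [AddCommMonoid V] [Module R V]
    (S : Set V) (hS : IsAdditiveSpine R S)
    (W : Submodule R V) (hW : IsSA W) :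
    W = Submodule.span R ((W : Set V) ∩ S) ∧
      (W : Set V) ⊆ AddSubmonoid.closure (haloIn R (W : Set V) ((W : Set V) ∩ S)) := by
  have key : ∀ w : V, w ∈ W →
      w ∈ Submodule.span R ((W : Set V) ∩ S) ∧
      w ∈ AddSubmonoid.closure (haloIn R (W : Set V) ((W : Set V) ∩ S)) := by
    intro w hw
    have hw' : w ∈ AddSubmonoid.closure (halo R S) := by rw [hS]; trivial
    revert hw
    induction hw' using AddSubmonoid.closure_induction with
    | mem x hx =>
        intro hxW
        obtain ⟨l, m, hlS, hml⟩ := hx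
        have hlW : l • x ∈ W := W.smul_mem l hxW
        constructor
        · have : l • x ∈ Submodule.span R ((W : Set V) ∩ S) :=
            Submodule.subset_span ⟨hlW, hlS⟩
          have := Submodule.smul_mem _ m this
          rwa [hml] at this
        · exact AddSubmonoid.subset_closure ⟨hxW, l, m, ⟨hlW, hlS⟩, hml⟩
    | zero =>
        intro _
        exact ⟨Submodule.zero_mem _, AddSubmonoid.zero_mem _⟩
    | add x y _ _ ihx ihy =>
        intro hxy
        obtain ⟨hxW, hyW⟩ := hW x y hxy
        obtain ⟨h1, h2⟩ := ihx hxW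
        obtain ⟨h3, h4⟩ := ihy hyW
        exact ⟨Submodule.add_mem _ h1 h3, AddSubmonoid.add_mem _ h2 h4⟩
  refine ⟨le_antisymm (fun w hw => (key w hw).1) ?_, fun w hw => (key w hw).2⟩
  rw [Submodule.span_le]
  exact Set.inter_subset_left
end

section
/- Let R be a semiring, V an R-module, (V_i)_{i ∈ I} a family of submodules with V = Σ_{i∈I} V_i, and for each i a subset S_i ⊆ V_i which is an additive spine of V_i. Then ⋃_{i∈I} S_i is an additive spine of V, and moreover ⋃_{i∈I} hal_{V_i}(S_i) = hal_V(⋃_{i∈I} S_i). -/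
theorem union_of_spines {R V : Type*} [Semiring R] [AddCommMonoid V] [Module R V]
    {ι : Type*} (Vf : ι → Submodule R V) (hsum : (⨆ i, Vf i) = ⊤)
    (S : ι → Set V) (hsub : ∀ i, S i ⊆ Vf i)
    (hsp : ∀ i, (Vf i : Set V) ⊆
      AddSubmonoid.closure (haloIn R (Vf i : Set V) (S i))) :
    IsAdditiveSpine R (⋃ i, S i) ∧
      (⋃ i, haloIn R (Vf i : Set V) (S i)) = halo R (⋃ i, S i) := by
  have heq : (⋃ i, haloIn R (Vf i : Set V) (S i)) = halo R (⋃ i, S i) := by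
    ext v
    constructor
    · rintro ⟨_, ⟨i, rfl⟩, hv, l, m, hls, hml⟩
      exact ⟨l, m, Set.mem_iUnion.2 ⟨i, hls⟩, hml⟩
    · rintro ⟨l, m, hls, hml⟩
      obtain ⟨i, hi⟩ := Set.mem_iUnion.1 hls
      refine Set.mem_iUnion.2 ⟨i, ?_, l, m, hi, hml⟩
      have : m • (l • v) ∈ Vf i := (Vf i).smul_mem m (hsub i hi)
      rwa [hml] at this
  refine ⟨?_, heq⟩
  rw [IsAdditiveSpine, eq_top_iff]
  intro v _
  have hv : v ∈ ⨆ i, Vf i := hsum ▸ Submodule.mem_top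
  refine Submodule.iSup_induction (motive := fun x => x ∈ AddSubmonoid.closure (halo R (⋃ i, S i))) Vf hv (fun i x hx => ?_) (AddSubmonoid.zero_mem _)
    (fun x y hx hy => AddSubmonoid.add_mem _ hx hy)
  have := hsp i hx
  refine AddSubmonoid.closure_mono ?_ this
  rw [← heq]
  exact Set.subset_iUnion (fun j => haloIn R (Vf j : Set V) (S j)) i
end
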